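/- For any labeled finite simple graph G on n ≥ 1 vertices, span⟨G⟩ ≤ 4n − 4g(G), where g(G) = 1 − (k + l − n)/2 is the atom genus, k = corank A(G(s_A)) + 1 is the number of circles in the A-state s_A (the set of vertices labeled −) and l = corank A(G(s_B)) + 1 is the number of circles in the B-state s_B (the set of vertices labeled +). Equivalently, span⟨G⟩ ≤ 2n + 2(k−1) + 2(l−1). -/

import Mathlib

open Matrix LaurentPolynomial
open scoped Classical

noncomputable section

def adjMatS {V : Type} (G : SimpleGraph V) (s : Finset V) : Matrix s s (ZMod 2) :=
  fun i j => if G.Adj i.1 j.1 then 1 else 0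

def corankS {V : Type} (G : SimpleGraph V) (s : Finset V) : ℕ :=
  s.card - (adjMatS G s).rank

def adjMat {V : Type} [Fintype V] (G : SimpleGraph V) : Matrix V V (ZMod 2) :=
  fun i j => if G.Adj i j then 1 else 0

def corankM {m : Type} [Fintype m] (M : Matrix m m (ZMod 2)) : ℕ :=
  Fintype.card m - M.rank

def alphaCount {V : Type} [Fintype V] (σ : V → Bool) (s : Finset V) : ℕ :=
  (s.filter (fun i => σ i = false)).card + ((sᶜ).filter (fun i => σ i = true)).card

def bracket {V : Type} [Fintype V] (G : SimpleGraph V) (σ : V → Bool) : LaurentPolynomial ℚ :=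
  ∑ s : Finset V, T (2 * (alphaCount σ s : ℤ) - (Fintype.card V : ℤ)) *
    (-T 2 - T (-2)) ^ (corankS G s)

def lspan (p : LaurentPolynomial ℚ) : ℤ := (p.coeff.support.max.unbotD 0) - (p.coeff.support.min.untopD 0)

def Bmat {V : Type} [Fintype V] (G : SimpleGraph V) (x : V) : Matrix V V (ZMod 2) :=
  adjMat G + 1 + Matrix.single x x 1

def writhe {V : Type} [Fintype V] (G : SimpleGraph V) (σ : V → Bool) : ℤ :=
  ∑ x, (-1 : ℤ) ^ (corankM (Bmat G x)) * (if σ x then 1 else -1)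

def extAdj {V : Type} (G : SimpleGraph V) (N : Set V) : V ⊕ Bool → V ⊕ Bool → Prop
  | .inl i, .inl j => G.Adj i j
  | .inl i, .inr _ => i ∈ N
  | .inr _, .inl j => j ∈ N
  | .inr _, .inr _ => False

def ext2 {V : Type} (G : SimpleGraph V) (N : Set V) : SimpleGraph (V ⊕ Bool) where
  Adj := extAdj G N
  symm := ⟨by
    rintro (i|b) (j|c) h
    · exact G.symm.symm _ _ h
    · exact h
    · exact h
    · exact h⟩
  loopless := ⟨by
    rintro (i|b) h
    · exact G.irrefl h
    · exact h⟩

def optExt {V : Type} (G : SimpleGraph V) : SimpleGraph (Option V) where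
  Adj x y := match x, y with
    | some i, some j => G.Adj i j
    | _, _ => False
  symm := ⟨by
    rintro (_|i) (_|j) h
    · exact h
    · exact h
    · exact h
    · exact G.symm.symm _ _ h⟩
  loopless := ⟨by
    rintro (_|i) h
    · exact h
    · exact G.irrefl h⟩

open scoped symmDiff

section Aux

open Finset

/-! ### Support bounds for Laurent polynomials -/

def Bdd (lo hi : ℤ) (p : LaurentPolynomial ℚ) : Prop :=
  ∀ d ∈ p.coeff.support, lo ≤ d ∧ d ≤ hi

lemma bdd_T (n : ℤ) : Bdd n n (T n : LaurentPolynomial ℚ) := by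
  intro d hd
  have : d ∈ ({n} : Finset ℤ) := Finsupp.support_single_subset hd
  simp only [Finset.mem_singleton] at this
  subst this
  exact ⟨le_rfl, le_rfl⟩

lemma bdd_one : Bdd 0 0 (1 : LaurentPolynomial ℚ) := by
  simpa using bdd_T 0

lemma bdd_mul {l1 h1 l2 h2 : ℤ} {p q : LaurentPolynomial ℚ}
    (hp : Bdd l1 h1 p) (hq : Bdd l2 h2 q) : Bdd (l1 + l2) (h1 + h2) (p * q) := by
  intro d hd
  have hmem := AddMonoidAlgebra.support_coeff_mul_subset p q hd
  rw [Finset.mem_add] at hmem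
  obtain ⟨a, ha, b, hb, rfl⟩ := hmem
  obtain ⟨ha1, ha2⟩ := hp a ha
  obtain ⟨hb1, hb2⟩ := hq b hb
  exact ⟨add_le_add ha1 hb1, add_le_add ha2 hb2⟩

lemma bdd_pow {l h : ℤ} {p : LaurentPolynomial ℚ} (hp : Bdd l h p) (c : ℕ) :
    Bdd (c * l) (c * h) (p ^ c) := by
  induction c with
  | zero => simpa using bdd_one
  | succ c ih =>
      have hmul := bdd_mul ih hp
      rw [pow_succ]
      have e1 : ((c + 1 : ℕ) : ℤ) * l = (c : ℤ) * l + l := by push_cast; ring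
      have e2 : ((c + 1 : ℕ) : ℤ) * h = (c : ℤ) * h + h := by push_cast; ring
      rw [e1, e2]
      exact hmul

lemma bdd_base : Bdd (-2) 2 ((-T 2 - T (-2)) : LaurentPolynomial ℚ) := by
  intro d hd
  have hrw : ((-T 2 - T (-2)) : LaurentPolynomial ℚ) = -(T 2) + -(T (-2)) := by ring
  rw [hrw, AddMonoidAlgebra.coeff_add] at hd
  have := Finsupp.support_add hd
  rw [Finset.mem_union] at this
  rcases this with h | h
  · rw [AddMonoidAlgebra.coeff_neg, Finsupp.support_neg] at h
    obtain ⟨h1, h2⟩ := bdd_T (2 : ℤ) d h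
    omega
  · rw [AddMonoidAlgebra.coeff_neg, Finsupp.support_neg] at h
    obtain ⟨h1, h2⟩ := bdd_T (-2 : ℤ) d h
    omega

lemma lspan_le_of_bdd {lo hi : ℤ} {p : LaurentPolynomial ℚ}
    (h : Bdd lo hi p) (hlo : lo ≤ 0) (hhi : 0 ≤ hi) : lspan p ≤ hi - lo := by
  unfold lspan
  rcases eq_or_ne p 0 with rfl | hp
  · simp only [AddMonoidAlgebra.coeff_zero, Finsupp.support_zero, Finset.max_empty, Finset.min_empty,
      WithBot.unbotD_bot, WithTop.untopD_top]
    omega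
  · have hne : p.coeff.support.Nonempty := Finsupp.support_nonempty_iff.2 (AddMonoidAlgebra.coeff_eq_zero.not.2 hp)
    have hmax : p.coeff.support.max.unbotD 0 = p.coeff.support.max' hne := by
      rw [← Finset.coe_max' hne]; rfl
    have hmin : p.coeff.support.min.untopD 0 = p.coeff.support.min' hne := by
      rw [← Finset.coe_min' hne]; rfl
    rw [hmax, hmin]
    obtain ⟨-, h2⟩ := h _ (Finset.max'_mem _ hne)
    obtain ⟨h3, -⟩ := h _ (Finset.min'_mem _ hne)
    omega

/-! ### Rank inequalities -/

lemma matrix_rank_add_le {m n : Type} [Fintype m] [Fintype n]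
    (A B : Matrix m n (ZMod 2)) : (A + B).rank ≤ A.rank + B.rank := by
  have hle : LinearMap.range (A + B).mulVecLin ≤
      LinearMap.range A.mulVecLin ⊔ LinearMap.range B.mulVecLin := by
    rintro x ⟨v, rfl⟩
    rw [Matrix.mulVecLin_add]
    exact Submodule.mem_sup.2 ⟨_, ⟨v, rfl⟩, _, ⟨v, rfl⟩, rfl⟩
  exact (Submodule.finrank_mono hle).trans
    (Submodule.finrank_add_le_finrank_add_finrank _ _)

lemma rank_vecMulVec_le {m n : Type} [Fintype m] [Fintype n]
    (u : m → ZMod 2) (v : n → ZMod 2) : (Matrix.vecMulVec u v).rank ≤ 1 := by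
  rw [Matrix.vecMulVec_eq Unit]
  refine (Matrix.rank_mul_le_left _ _).trans ?_
  exact (Matrix.rank_le_card_width _).trans (by simp)

lemma rank_blocks {m : Type} [Fintype m] (N : Matrix (m ⊕ Unit) (m ⊕ Unit) (ZMod 2)) :
    N.toBlocks₁₁.rank ≤ N.rank ∧ N.rank ≤ N.toBlocks₁₁.rank + 2 := by
  set A := N.toBlocks₁₁ with hA
  set B := N.toBlocks₁₂ with hB
  set C := N.toBlocks₂₁ with hC
  set D := N.toBlocks₂₂ with hD
  have hN : N = Matrix.fromBlocks A B C D := (Matrix.fromBlocks_toBlocks N).symm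
  constructor
  · have h1 : Matrix.fromCols (1 : Matrix m m (ZMod 2)) (0 : Matrix m Unit (ZMod 2)) * N *
        Matrix.fromRows (1 : Matrix m m (ZMod 2)) (0 : Matrix Unit m (ZMod 2)) = A := by
      rw [hN, Matrix.fromCols_mul_fromBlocks, Matrix.fromCols_mul_fromRows]
      simp
    calc A.rank = ((Matrix.fromCols (1 : Matrix m m (ZMod 2)) (0 : Matrix m Unit (ZMod 2)) * N *
          Matrix.fromRows (1 : Matrix m m (ZMod 2)) (0 : Matrix Unit m (ZMod 2)) : Matrix m m (ZMod 2))).rank := by rw [h1]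
      _ ≤ (Matrix.fromCols (1 : Matrix m m (ZMod 2)) (0 : Matrix m Unit (ZMod 2)) * N).rank :=
          Matrix.rank_mul_le_left _ _
      _ ≤ N.rank := Matrix.rank_mul_le_right _ _
  · have h2 : Matrix.fromRows (1 : Matrix m m (ZMod 2)) (0 : Matrix Unit m (ZMod 2)) * A *
        Matrix.fromCols (1 : Matrix m m (ZMod 2)) (0 : Matrix m Unit (ZMod 2)) =
        Matrix.fromBlocks A 0 0 0 := by
      rw [Matrix.fromRows_mul, Matrix.fromRows_mul_fromCols]
      simp
    have hrankP : (Matrix.fromBlocks A 0 0 (0 : Matrix Unit Unit (ZMod 2))).rank ≤ A.rank := by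
      rw [← h2]
      calc (Matrix.fromRows (1 : Matrix m m (ZMod 2)) 0 * A *
            Matrix.fromCols 1 (0 : Matrix m Unit (ZMod 2))).rank
          ≤ (Matrix.fromRows (1 : Matrix m m (ZMod 2)) 0 * A).rank :=
            Matrix.rank_mul_le_left _ _
        _ ≤ A.rank := Matrix.rank_mul_le_right _ _
    set u₁ : m ⊕ Unit → ZMod 2 := Sum.elim (fun i => B i ()) (fun _ => 0) with hu₁
    set v₁ : m ⊕ Unit → ZMod 2 := Sum.elim (fun _ => 0) (fun _ => 1) with hv₁
    set u₂ : m ⊕ Unit → ZMod 2 := Sum.elim (fun _ => 0) (fun _ => 1) with hu₂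
    set v₂ : m ⊕ Unit → ZMod 2 := Sum.elim (fun j => C () j) (fun u => D () u) with hv₂
    have hdecomp : N = Matrix.fromBlocks A 0 0 0 + Matrix.vecMulVec u₁ v₁ +
        Matrix.vecMulVec u₂ v₂ := by
      rw [hN]
      ext i j
      rcases i with i | i <;> rcases j with j | j <;>
        simp [Matrix.vecMulVec_apply, hu₁, hv₁, hu₂, hv₂]
    calc N.rank = (Matrix.fromBlocks A 0 0 0 + Matrix.vecMulVec u₁ v₁ +
          Matrix.vecMulVec u₂ v₂).rank := by rw [← hdecomp]
      _ ≤ (Matrix.fromBlocks A 0 0 0 + Matrix.vecMulVec u₁ v₁).rank +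
          (Matrix.vecMulVec u₂ v₂).rank := matrix_rank_add_le _ _
      _ ≤ (Matrix.fromBlocks A 0 0 (0 : Matrix Unit Unit (ZMod 2))).rank +
          (Matrix.vecMulVec u₁ v₁).rank + (Matrix.vecMulVec u₂ v₂).rank := by
            have := matrix_rank_add_le (Matrix.fromBlocks A 0 0 (0 : Matrix Unit Unit (ZMod 2)))
              (Matrix.vecMulVec u₁ v₁)
            omega
      _ ≤ A.rank + 1 + 1 := by
            have := _root_.rank_vecMulVec_le u₁ v₁
            have := _root_.rank_vecMulVec_le u₂ v₂
            omega
      _ = A.rank + 2 := by omega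

/-! ### Corank step and symmetric-difference bound -/

lemma corank_cast {V : Type} (G : SimpleGraph V) (s : Finset V) :
    (corankS G s : ℤ) = (s.card : ℤ) - (adjMatS G s).rank := by
  have h : (adjMatS G s).rank ≤ s.card :=
    (Matrix.rank_le_card_width _).trans_eq (Fintype.card_coe s)
  rw [corankS, Nat.cast_sub h]

lemma rank_insert_bounds {V : Type} (G : SimpleGraph V) (s : Finset V) (x : V) (hx : x ∉ s) :
    (adjMatS G s).rank ≤ (adjMatS G (insert x s)).rank ∧
    (adjMatS G (insert x s)).rank ≤ (adjMatS G s).rank + 2 := by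
  set t := insert x s with ht
  have hfun : ∀ i : (s : Type), (i : V) ∈ t := fun i => Finset.mem_insert_of_mem i.2
  let f : (↥s ⊕ Unit) → ↥t := Sum.elim (fun i => ⟨i.1, hfun i⟩)
    (fun _ => ⟨x, Finset.mem_insert_self x s⟩)
  have hbij : Function.Bijective f := by
    constructor
    · rintro (a | a) (b | b) h
      · simp only [f, Sum.elim_inl, Subtype.mk.injEq] at h
        exact congrArg Sum.inl (Subtype.ext h)
      · simp only [f, Sum.elim_inl, Sum.elim_inr, Subtype.mk.injEq] at h
        exact absurd (h ▸ a.2) hx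
      · simp only [f, Sum.elim_inl, Sum.elim_inr, Subtype.mk.injEq] at h
        exact absurd (h ▸ b.2) hx
      · exact congrArg Sum.inr (Subsingleton.elim a b)
    · rintro ⟨y, hy⟩
      rcases Finset.mem_insert.1 hy with rfl | hy'
      · exact ⟨Sum.inr (), rfl⟩
      · exact ⟨Sum.inl ⟨y, hy'⟩, rfl⟩
  let e : (↥s ⊕ Unit) ≃ ↥t := Equiv.ofBijective f hbij
  set N : Matrix (↥s ⊕ Unit) (↥s ⊕ Unit) (ZMod 2) := (adjMatS G t).submatrix e e with hNdef
  have hrankN : N.rank = (adjMatS G t).rank := Matrix.rank_submatrix _ e e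
  have hblock : N.toBlocks₁₁ = adjMatS G s := by
    ext i j
    rfl
  obtain ⟨hb1, hb2⟩ := rank_blocks N
  rw [hblock, hrankN] at hb1 hb2
  exact ⟨hb1, hb2⟩

lemma corank_step {V : Type} (G : SimpleGraph V) (s : Finset V) (x : V) (hx : x ∉ s) :
    (corankS G s : ℤ) ≤ corankS G (insert x s) + 1 ∧
    (corankS G (insert x s) : ℤ) ≤ corankS G s + 1 := by
  obtain ⟨h1, h2⟩ := rank_insert_bounds G s x hx
  have hcard : (insert x s).card = s.card + 1 := Finset.card_insert_of_notMem hx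
  rw [corank_cast, corank_cast, hcard]
  have hle : (adjMatS G s).rank ≤ s.card :=
    (Matrix.rank_le_card_width _).trans_eq (Fintype.card_coe s)
  push_cast
  omega

lemma corank_le_symmDiff {V : Type} (G : SimpleGraph V) :
    ∀ (n : ℕ) (s t : Finset V), (s ∆ t).card = n →
      (corankS G s : ℤ) ≤ corankS G t + n := by
  intro n
  induction n with
  | zero =>
      intro s t h
      rw [Finset.card_eq_zero, Finset.symmDiff_eq_empty] at h
      subst h
      simp
  | succ n ih =>
      intro s t h
      have hne : (s ∆ t).Nonempty := Finset.card_pos.1 (by omega)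
      obtain ⟨x, hxmem⟩ := hne
      rcases Finset.mem_symmDiff.1 hxmem with ⟨hxs, hxt⟩ | ⟨hxt, hxs⟩
      · -- x ∈ s, x ∉ t : remove x from s
        have hxe : x ∉ s.erase x := Finset.notMem_erase x s
        have hins : insert x (s.erase x) = s := Finset.insert_erase hxs
        have hsd : (s.erase x) ∆ t = (s ∆ t).erase x := by
          ext y
          by_cases hy : y = x
          · subst hy
            simp [Finset.mem_symmDiff, Finset.mem_erase, hxt]
          · simp only [Finset.mem_symmDiff, Finset.mem_erase, hy, not_false_iff,
              true_and, false_or, and_true]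
            tauto
        have hcd : ((s.erase x) ∆ t).card = n := by
          rw [hsd, Finset.card_erase_of_mem hxmem, h]; omega
        have hstep := (corank_step G (s.erase x) x hxe).2
        rw [hins] at hstep
        have := ih (s.erase x) t hcd
        push_cast
        omega
      · -- x ∈ t, x ∉ s : add x to s
        have hsd : (insert x s) ∆ t = (s ∆ t).erase x := by
          ext y
          by_cases hy : y = x
          · subst hy
            simp [Finset.mem_symmDiff, Finset.mem_erase, hxt, hxs]
          · simp only [Finset.mem_symmDiff, Finset.mem_erase, Finset.mem_insert, hy,
              not_false_iff, true_and, false_or]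
            tauto
        have hcd : ((insert x s) ∆ t).card = n := by
          rw [hsd, Finset.card_erase_of_mem hxmem, h]; omega
        have hstep := (corank_step G s x hxs).1
        have := ih (insert x s) t hcd
        push_cast
        omega

/-! ### Alpha count identities -/

lemma alpha_eq_symmDiff {V : Type} [Fintype V] (σ : V → Bool) (s : Finset V) :
    alphaCount σ s = (s ∆ (Finset.univ.filter (fun i => σ i = true))).card := by
  set B := Finset.univ.filter (fun i => σ i = true) with hBdef
  have h1 : s.filter (fun i => σ i = false) = s \ B := by
    ext y
    simp [hBdef]
  have h2 : sᶜ.filter (fun i => σ i = true) = B \ s := by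
    ext y
    simp [hBdef, and_comm]
  rw [alphaCount, h1, h2, symmDiff_def, Finset.sup_eq_union,
    Finset.card_union_of_disjoint (disjoint_sdiff_sdiff)]

lemma symmDiff_card_add {V : Type} [Fintype V] (σ : V → Bool) (s : Finset V) :
    (s ∆ (Finset.univ.filter (fun i => σ i = false))).card +
    (s ∆ (Finset.univ.filter (fun i => σ i = true))).card = Fintype.card V := by
  have hcompl : s ∆ (Finset.univ.filter (fun i => σ i = false)) =
      (s ∆ (Finset.univ.filter (fun i => σ i = true)))ᶜ := by
    ext y
    simp only [Finset.mem_symmDiff, Finset.mem_filter, Finset.mem_univ, true_and,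
      Finset.mem_compl]
    cases hb : σ y <;> simp [hb] <;> tauto
  rw [hcompl, Finset.card_compl]
  have := Finset.card_le_univ (s ∆ (Finset.univ.filter (fun i => σ i = true)))
  omega

end Aux
/-- span⟨G⟩ ≤ 4n - 4g(G) = 2n + 2(k-1) + 2(l-1), where k-1 and l-1 are the
coranks of the A-state (all `-` vertices) and B-state (all `+` vertices). -/
theorem span_le {V : Type} [Fintype V] (G : SimpleGraph V) (σ : V → Bool)
    (hn : 1 ≤ Fintype.card V) :
    lspan (bracket G σ) ≤ 2 * (Fintype.card V : ℤ) +
      2 * (corankS G (Finset.univ.filter (fun i => σ i = false)) : ℤ) +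
      2 * (corankS G (Finset.univ.filter (fun i => σ i = true)) : ℤ) := by
  set A := Finset.univ.filter (fun i => σ i = false) with hAdef
  set B := Finset.univ.filter (fun i => σ i = true) with hBdef
  set n : ℤ := (Fintype.card V : ℤ) with hndef
  set cA : ℤ := (corankS G A : ℤ) with hcA
  set cB : ℤ := (corankS G B : ℤ) with hcB
  have hbdd : Bdd (-(n + 2 * cB)) (n + 2 * cA) (bracket G σ) := by
    intro d hd
    rw [bracket, AddMonoidAlgebra.coeff_sum] at hd
    obtain ⟨s, -, hs⟩ := Finsupp.mem_support_finset_sum d hd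
    have hterm := bdd_mul (bdd_T (2 * (alphaCount σ s : ℤ) - (Fintype.card V : ℤ)))
      (bdd_pow bdd_base (corankS G s)) d hs
    obtain ⟨hlo, hhi⟩ := hterm
    have h1 : (corankS G s : ℤ) ≤ cA + ((s ∆ A).card : ℤ) :=
      corank_le_symmDiff G (s ∆ A).card s A rfl
    have h2 : (corankS G s : ℤ) ≤ cB + ((s ∆ B).card : ℤ) :=
      corank_le_symmDiff G (s ∆ B).card s B rfl
    have h3 : alphaCount σ s = (s ∆ B).card := alpha_eq_symmDiff σ s
    have h4 : (s ∆ A).card + (s ∆ B).card = Fintype.card V := symmDiff_card_add σ s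
    rw [h3] at hlo hhi
    constructor
    · have : (2 : ℤ) * ((s ∆ B).card : ℤ) - n + (corankS G s : ℤ) * (-2) ≤ d := by
        push_cast at hlo ⊢
        linarith
      push_cast at this h2 ⊢
      linarith
    · have : d ≤ 2 * ((s ∆ B).card : ℤ) - n + (corankS G s : ℤ) * 2 := by
        push_cast at hhi ⊢
        linarith
      have h5 : ((s ∆ B).card : ℤ) = n - ((s ∆ A).card : ℤ) := by
        push_cast
        omega
      push_cast at this h1 ⊢
      omega
  have hA0 : (0:ℤ) ≤ cA := by rw [hcA]; exact Int.natCast_nonneg _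
  have hB0 : (0:ℤ) ≤ cB := by rw [hcB]; exact Int.natCast_nonneg _
  have hn0 : (0:ℤ) ≤ n := by rw [hndef]; exact Int.natCast_nonneg _
  have hfin := lspan_le_of_bdd hbdd (by omega) (by omega)
  linarith
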